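/- arXiv:1811.12345 — 4 statements merged into one kernel-verified Lean document; each statement's English description precedes it below -/
import Mathlib

section
/- Let X_1,…,X_M with X_m ∈ ℝ^{D_m×N} be matrices such that each X_m X_mᵀ is invertible, let L ∈ ℝ^{N×N} be symmetric, let γ ≥ 0, and let S ∈ ℝ^{d×N} satisfy S Sᵀ = I_d. Then the minimum over U_1,…,U_M (with U_m ∈ ℝ^{D_m×d}) of Σ_{m=1}^M ‖U_mᵀ X_m − S‖_F² + γ Tr(S L Sᵀ) equals M·d − Tr(S C Sᵀ), where C = Σ_{m=1}^M X_mᵀ (X_m X_mᵀ)^{-1} X_m − γ L, and the minimum is attained at U_m = (X_m X_mᵀ)^{-1} X_m Sᵀ for each m. -/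
open Matrix BigOperators

/-- Squared Frobenius norm of a real matrix: `‖A‖_F² = ∑ᵢ ∑ⱼ Aᵢⱼ²`. -/
noncomputable def frobSq {m n : Type*} [Fintype m] [Fintype n]
    (A : Matrix m n ℝ) : ℝ :=
  ∑ i, ∑ j, (A i j) ^ 2

lemma frobSq_eq_trace {m n : Type*} [Fintype m] [Fintype n]
    (A : Matrix m n ℝ) : frobSq A = (A * Aᵀ).trace := by
  simp [frobSq, Matrix.trace, Matrix.mul_apply, Matrix.diag, sq]

lemma frobSq_nonneg {m n : Type*} [Fintype m] [Fintype n]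
    (A : Matrix m n ℝ) : 0 ≤ frobSq A := by
  apply Finset.sum_nonneg; intro i _
  apply Finset.sum_nonneg; intro j _
  positivity

section key
variable {D N d : ℕ} (X : Matrix (Fin D) (Fin N) ℝ) (S : Matrix (Fin d) (Fin N) ℝ)

lemma inv_symm : ((X * Xᵀ)⁻¹)ᵀ = (X * Xᵀ)⁻¹ := by
  rw [Matrix.transpose_nonsing_inv, Matrix.transpose_mul, Matrix.transpose_transpose]

lemma hdet (hX : IsUnit (X * Xᵀ)) : IsUnit (X * Xᵀ).det :=
  (Matrix.isUnit_iff_isUnit_det _).mp hX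

lemma hzero (hX : IsUnit (X * Xᵀ)) :
    X * Xᵀ * ((X * Xᵀ)⁻¹ * X * Sᵀ) = X * Sᵀ := by
  calc X * Xᵀ * ((X * Xᵀ)⁻¹ * X * Sᵀ)
      = X * Xᵀ * (X * Xᵀ)⁻¹ * (X * Sᵀ) := by simp only [Matrix.mul_assoc]
    _ = X * Sᵀ := by rw [Matrix.mul_nonsing_inv _ (hdet X hX), Matrix.one_mul]

lemma decomp (hX : IsUnit (X * Xᵀ)) (U : Matrix (Fin D) (Fin d) ℝ) :
    frobSq (Uᵀ * X - S)
      = frobSq ((U - (X * Xᵀ)⁻¹ * X * Sᵀ)ᵀ * X)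
        + frobSq ((((X * Xᵀ)⁻¹ * X * Sᵀ)ᵀ) * X - S) := by
  set U' := (X * Xᵀ)⁻¹ * X * Sᵀ with hU'
  set F := U'ᵀ * X - S with hF
  set G := (U - U')ᵀ * X with hG
  have hXF : X * Fᵀ = 0 := by
    have h : X * (Xᵀ * U') = X * Sᵀ := by
      rw [← Matrix.mul_assoc]; exact hzero X S hX
    rw [hF, Matrix.transpose_sub, Matrix.transpose_mul, Matrix.transpose_transpose,
      Matrix.mul_sub, h, sub_self]
  have hGF : G * Fᵀ = 0 := by
    rw [hG, Matrix.mul_assoc, hXF, Matrix.mul_zero]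
  have hFG : F * Gᵀ = 0 := by
    have := congrArg Matrix.transpose hGF
    simpa [Matrix.transpose_mul] using this
  have hE : Uᵀ * X - S = G + F := by
    rw [hG, hF, Matrix.transpose_sub, Matrix.sub_mul]; abel
  rw [hE, frobSq_eq_trace, frobSq_eq_trace, frobSq_eq_trace,
    Matrix.transpose_add, Matrix.add_mul, Matrix.mul_add, Matrix.mul_add,
    hGF, hFG]
  simp [Matrix.trace_add]

lemma value (hX : IsUnit (X * Xᵀ)) (hS : S * Sᵀ = 1) :
    frobSq ((((X * Xᵀ)⁻¹ * X * Sᵀ)ᵀ) * X - S)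
      = (d : ℝ) - (S * (Xᵀ * (X * Xᵀ)⁻¹ * X) * Sᵀ).trace := by
  set P := Xᵀ * (X * Xᵀ)⁻¹ * X with hP
  have hUX : (((X * Xᵀ)⁻¹ * X * Sᵀ)ᵀ) * X = S * P := by
    rw [Matrix.transpose_mul, Matrix.transpose_mul, inv_symm X,
      Matrix.transpose_transpose, hP]
    simp only [Matrix.mul_assoc]
  have hPsymm : Pᵀ = P := by
    rw [hP, Matrix.transpose_mul, Matrix.transpose_mul, inv_symm X,
      Matrix.transpose_transpose]
    simp only [Matrix.mul_assoc]
  have hPP : P * P = P := by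
    have h1 : X * Xᵀ * (X * Xᵀ)⁻¹ = 1 := Matrix.mul_nonsing_inv _ (hdet X hX)
    calc P * P = Xᵀ * (X * Xᵀ)⁻¹ * (X * Xᵀ * (X * Xᵀ)⁻¹) * X := by
          rw [hP]; simp only [Matrix.mul_assoc]
      _ = P := by rw [h1, Matrix.mul_one, hP]
  have hSPP : S * P * (P * Sᵀ) = S * P * Sᵀ := by
    calc S * P * (P * Sᵀ) = S * (P * P) * Sᵀ := by simp only [Matrix.mul_assoc]
      _ = S * P * Sᵀ := by rw [hPP]
  have hSP : S * (P * Sᵀ) = S * P * Sᵀ := by simp only [Matrix.mul_assoc]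
  have hFF : (S * P - S) * (S * P - S)ᵀ = S * Sᵀ - S * P * Sᵀ := by
    rw [Matrix.transpose_sub, Matrix.transpose_mul, hPsymm, Matrix.mul_sub,
      Matrix.sub_mul, Matrix.sub_mul, hSPP, hSP]
    abel
  rw [frobSq_eq_trace, hUX, hFF, hS]
  simp [Matrix.trace_sub, Matrix.trace_one]

end key

/-- For fixed `S` with `S Sᵀ = I`, the GMCCA objective
`∑ₘ ‖Uₘᵀ Xₘ - S‖_F² + γ Tr(S L Sᵀ)` is minimized over the loading matrices at
`Uₘ = (Xₘ Xₘᵀ)⁻¹ Xₘ Sᵀ`, with minimum value `M d - Tr(S C Sᵀ)`, where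
`C = ∑ₘ Xₘᵀ (Xₘ Xₘᵀ)⁻¹ Xₘ - γ L`. -/
theorem gmcca_inner_minimization {M N d : ℕ} (Dm : Fin M → ℕ)
    (X : ∀ m, Matrix (Fin (Dm m)) (Fin N) ℝ)
    (hX : ∀ m, IsUnit (X m * (X m)ᵀ))
    (L : Matrix (Fin N) (Fin N) ℝ) (hL : L.IsSymm)
    (γ : ℝ) (hγ : 0 ≤ γ)
    (S : Matrix (Fin d) (Fin N) ℝ) (hS : S * Sᵀ = 1) :
    (∀ U : ∀ m, Matrix (Fin (Dm m)) (Fin d) ℝ,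
        (∑ m, frobSq ((((X m * (X m)ᵀ)⁻¹ * X m * Sᵀ)ᵀ) * X m - S))
            + γ * (S * L * Sᵀ).trace
          ≤ (∑ m, frobSq ((U m)ᵀ * X m - S)) + γ * (S * L * Sᵀ).trace) ∧
    (∑ m, frobSq ((((X m * (X m)ᵀ)⁻¹ * X m * Sᵀ)ᵀ) * X m - S))
        + γ * (S * L * Sᵀ).trace
      = (M : ℝ) * (d : ℝ)
        - (S * ((∑ m, (X m)ᵀ * (X m * (X m)ᵀ)⁻¹ * X m) - γ • L) * Sᵀ).trace := by
  constructor
  · intro U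
    apply add_le_add_left
    apply Finset.sum_le_sum
    intro m _
    rw [decomp (X m) S (hX m) (U m)]
    nlinarith [frobSq_nonneg ((U m - (X m * (X m)ᵀ)⁻¹ * X m * Sᵀ)ᵀ * X m)]
  · have hval : ∀ m, frobSq ((((X m * (X m)ᵀ)⁻¹ * X m * Sᵀ)ᵀ) * X m - S)
        = (d : ℝ) - (S * ((X m)ᵀ * (X m * (X m)ᵀ)⁻¹ * X m) * Sᵀ).trace :=
      fun m => value (X m) S (hX m) hS
    simp only [hval]
    rw [Finset.sum_sub_distrib, Finset.sum_const, Finset.card_univ, Fintype.card_fin]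
    have key : (S * ((∑ m, (X m)ᵀ * (X m * (X m)ᵀ)⁻¹ * X m) - γ • L) * Sᵀ).trace
        = (∑ m, (S * ((X m)ᵀ * (X m * (X m)ᵀ)⁻¹ * X m) * Sᵀ).trace)
          - γ * (S * L * Sᵀ).trace := by
      rw [Matrix.mul_sub, Matrix.sub_mul, Matrix.trace_sub]
      have h1 : S * (∑ m, (X m)ᵀ * (X m * (X m)ᵀ)⁻¹ * X m) * Sᵀ
          = ∑ m, S * ((X m)ᵀ * (X m * (X m)ᵀ)⁻¹ * X m) * Sᵀ := by
        rw [Matrix.mul_sum, Matrix.sum_mul]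
      have h2 : (S * (γ • L) * Sᵀ).trace = γ * (S * L * Sᵀ).trace := by
        rw [Matrix.mul_smul, Matrix.smul_mul, Matrix.trace_smul, smul_eq_mul]
      rw [h1, Matrix.trace_sum, h2]
    rw [key, nsmul_eq_mul]
    ring
end

section
/- Let X_1,…,X_M with X_m ∈ ℝ^{D_m×N} be matrices such that each X_m X_mᵀ is invertible, let L ∈ ℝ^{N×N} be symmetric, and let γ ≥ 0. Define C = Σ_{m=1}^M X_mᵀ (X_m X_mᵀ)^{-1} X_m − γ L with eigenvalues λ_1 ≥ … ≥ λ_N. Then the minimum of Σ_{m=1}^M ‖U_mᵀ X_m − S‖_F² + γ Tr(S L Sᵀ) over all U_m ∈ ℝ^{D_m×d} and all S ∈ ℝ^{d×N} with S Sᵀ = I_d equals M·d − Σ_{i=1}^d λ_i. -/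
open Matrix BigOperators

lemma frobSq_zero {m n : Type*} [Fintype m] [Fintype n] :
    frobSq (0 : Matrix m n ℝ) = 0 := by simp [frobSq]

lemma view_identity {D N d : ℕ} (X : Matrix (Fin D) (Fin N) ℝ) (hX : IsUnit (X * Xᵀ))
    (S : Matrix (Fin d) (Fin N) ℝ) (hS : S * Sᵀ = 1)
    (U : Matrix (Fin D) (Fin d) ℝ) :
    frobSq (Uᵀ * X - S)
      = frobSq (Xᵀ * (U - (X * Xᵀ)⁻¹ * X * Sᵀ)) + d
        - (S * (Xᵀ * (X * Xᵀ)⁻¹ * X) * Sᵀ).trace := by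
  have hdet : IsUnit (X * Xᵀ).det := (Matrix.isUnit_iff_isUnit_det _).1 hX
  set G := X * Xᵀ with hG
  have hG1 : G⁻¹ * G = 1 := Matrix.nonsing_inv_mul _ hdet
  have hG2 : G * G⁻¹ = 1 := Matrix.mul_nonsing_inv _ hdet
  have hGT : Gᵀ = G := by rw [hG, transpose_mul, transpose_transpose]
  have hGiT : (G⁻¹)ᵀ = G⁻¹ := by
    rw [Matrix.transpose_nonsing_inv, hGT]
  have e1 : (Uᵀ * X - S) * (Uᵀ * X - S)ᵀ
      = Uᵀ * G * U - Uᵀ * (X * Sᵀ) - S * Xᵀ * U + 1 := by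
    rw [transpose_sub, transpose_mul, transpose_transpose, Matrix.sub_mul,
      Matrix.mul_sub, Matrix.mul_sub, hS, hG]
    simp only [Matrix.mul_assoc]
    abel
  set E := U * Uᵀ - U * (S * Xᵀ) * G⁻¹ - G⁻¹ * (X * Sᵀ) * Uᵀ
          + G⁻¹ * (X * Sᵀ) * (S * Xᵀ) * G⁻¹ with hE
  have e2 : (Xᵀ * (U - G⁻¹ * X * Sᵀ)) * (Xᵀ * (U - G⁻¹ * X * Sᵀ))ᵀ
      = Xᵀ * (E * X) := by
    rw [transpose_mul, transpose_sub, transpose_mul, transpose_mul, transpose_transpose,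
      hGiT, hE]
    rw [Matrix.sub_mul, Matrix.mul_sub]
    simp only [Matrix.sub_mul, Matrix.mul_sub, Matrix.add_mul, Matrix.mul_add,
      Matrix.mul_assoc, transpose_transpose]
    abel
  have h1 : (U * Uᵀ * G).trace = (Uᵀ * G * U).trace := (Matrix.trace_mul_cycle Uᵀ G U).symm
  have h2 : (U * (S * Xᵀ) * G⁻¹ * G).trace = (S * Xᵀ * U).trace := by
    rw [Matrix.mul_assoc (U * (S * Xᵀ)) G⁻¹ G, hG1, Matrix.mul_one,
      Matrix.trace_mul_comm]
  have h3 : (G⁻¹ * (X * Sᵀ) * Uᵀ * G).trace = (Uᵀ * (X * Sᵀ)).trace := by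
    rw [Matrix.trace_mul_comm, ← Matrix.mul_assoc, ← Matrix.mul_assoc, hG2,
      Matrix.one_mul, Matrix.trace_mul_comm]
  have h4 : (G⁻¹ * (X * Sᵀ) * (S * Xᵀ) * G⁻¹ * G).trace
      = (S * (Xᵀ * G⁻¹ * X) * Sᵀ).trace := by
    rw [Matrix.mul_assoc (G⁻¹ * (X * Sᵀ) * (S * Xᵀ)) G⁻¹ G, hG1, Matrix.mul_one,
      Matrix.trace_mul_comm]
    simp only [Matrix.mul_assoc]
  have htr1 : (Xᵀ * (E * X)).trace = (E * G).trace := by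
    rw [Matrix.trace_mul_comm, Matrix.mul_assoc, ← hG]
  rw [frobSq_eq_trace, frobSq_eq_trace, e1, e2, htr1, hE]
  simp only [Matrix.sub_mul, Matrix.add_mul, trace_sub, trace_add, trace_one]
  rw [h1, h2, h3, h4]
  simp only [Finset.card_univ, Fintype.card_fin]
  ring

lemma kyfan {N d : ℕ} (hd : d ≤ N) (lam w : Fin N → ℝ) (hlam : Antitone lam)
    (hw0 : ∀ i, 0 ≤ w i) (hw1 : ∀ i, w i ≤ 1) (hsum : ∑ i, w i = d) :
    ∑ i, lam i * w i ≤ ∑ i : Fin d, lam (Fin.castLE hd i) := by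
  rcases Nat.eq_zero_or_pos d with hd0 | hdpos
  · subst hd0
    have hz : ∀ i ∈ Finset.univ, w i = 0 := by
      intro i _
      have := (Finset.sum_eq_zero_iff_of_nonneg (fun i _ => hw0 i)).1 (by simpa using hsum)
      exact this i (Finset.mem_univ i)
    simp only [Finset.univ_eq_empty, Finset.sum_empty]
    calc ∑ i, lam i * w i = ∑ i : Fin N, 0 := by
          apply Finset.sum_congr rfl; intro i _; rw [hz i (Finset.mem_univ i), mul_zero]
      _ ≤ 0 := by simp
  · set lamN : ℕ → ℝ := fun k => if h : k < N then lam ⟨k, h⟩ else 0 with hlamN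
    set wN : ℕ → ℝ := fun k => if h : k < N then w ⟨k, h⟩ else 0 with hwN
    have hL : ∑ i : Fin N, lam i * w i = ∑ k ∈ Finset.range N, lamN k * wN k := by
      rw [← Fin.sum_univ_eq_sum_range (fun k => lamN k * wN k) N]
      apply Finset.sum_congr rfl
      intro i _
      simp [hlamN, hwN, i.isLt]
    have hsumN : ∑ k ∈ Finset.range N, wN k = d := by
      rw [← Fin.sum_univ_eq_sum_range wN N, ← hsum]
      apply Finset.sum_congr rfl
      intro i _
      simp [hwN, i.isLt]
    have hR : ∑ i : Fin d, lam (Fin.castLE hd i) = ∑ k ∈ Finset.range d, lamN k := by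
      rw [← Fin.sum_univ_eq_sum_range lamN d]
      apply Finset.sum_congr rfl
      intro i _
      have hi : (i : ℕ) < N := lt_of_lt_of_le i.isLt hd
      simp only [hlamN, hi, dif_pos]
      rfl
    rw [hL, hR]
    set c : ℝ := lamN (d - 1) with hc
    have hdm : d - 1 < N := lt_of_lt_of_le (Nat.sub_lt hdpos one_pos) hd
    have hcval : c = lam ⟨d - 1, hdm⟩ := by simp [hc, hlamN, hdm]
    have hw0N : ∀ k, 0 ≤ wN k := by
      intro k; by_cases h : k < N <;> simp [hwN, h] ; exact hw0 _
    have hw1N : ∀ k ∈ Finset.range N, wN k ≤ 1 := by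
      intro k hk
      have h : k < N := Finset.mem_range.1 hk
      simp [hwN, h]; exact hw1 _
    have hsplit : ∑ k ∈ Finset.range N, lamN k * wN k
        = ∑ k ∈ Finset.range d, lamN k * wN k
          + ∑ k ∈ Finset.Ico d N, lamN k * wN k := by
      simp only [Finset.range_eq_Ico]
      exact (Finset.sum_Ico_consecutive _ (Nat.zero_le d) hd).symm
    have hsplitw : ∑ k ∈ Finset.range N, wN k
        = ∑ k ∈ Finset.range d, wN k + ∑ k ∈ Finset.Ico d N, wN k := by
      simp only [Finset.range_eq_Ico]
      exact (Finset.sum_Ico_consecutive _ (Nat.zero_le d) hd).symm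
    have htail : ∑ k ∈ Finset.Ico d N, lamN k * wN k ≤ c * ∑ k ∈ Finset.Ico d N, wN k := by
      rw [Finset.mul_sum]
      apply Finset.sum_le_sum
      intro k hk
      obtain ⟨hk1, hk2⟩ := Finset.mem_Ico.1 hk
      have hlk : lamN k ≤ c := by
        rw [hcval]
        simp only [hlamN, hk2, dif_pos]
        exact hlam (by simp [Fin.le_def]; omega)
      exact mul_le_mul_of_nonneg_right hlk (hw0N k)
    have hhead : c * ∑ k ∈ Finset.range d, (1 - wN k)
        ≤ ∑ k ∈ Finset.range d, lamN k * (1 - wN k) := by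
      rw [Finset.mul_sum]
      apply Finset.sum_le_sum
      intro k hk
      have hk1 : k < d := Finset.mem_range.1 hk
      have hk2 : k < N := lt_of_lt_of_le hk1 hd
      have hck : c ≤ lamN k := by
        rw [hcval]
        simp only [hlamN, hk2, dif_pos]
        exact hlam (by simp [Fin.le_def]; omega)
      have : 0 ≤ 1 - wN k := by
        have := hw1N k (Finset.mem_range.2 hk2)
        linarith
      exact mul_le_mul_of_nonneg_right hck this
    have hkey : ∑ k ∈ Finset.Ico d N, wN k = ∑ k ∈ Finset.range d, (1 - wN k) := by
      have h1 : ∑ k ∈ Finset.range d, (1 - wN k)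
          = d - ∑ k ∈ Finset.range d, wN k := by
        rw [Finset.sum_sub_distrib]
        simp
      rw [h1]
      have := hsplitw
      rw [hsumN] at this
      linarith
    have hexp : ∑ k ∈ Finset.range d, lamN k * (1 - wN k)
        = ∑ k ∈ Finset.range d, lamN k - ∑ k ∈ Finset.range d, lamN k * wN k := by
      rw [← Finset.sum_sub_distrib]
      apply Finset.sum_congr rfl
      intro k _
      ring
    rw [hsplit]
    have h2 : c * ∑ k ∈ Finset.Ico d N, wN k = c * ∑ k ∈ Finset.range d, (1 - wN k) := by
      rw [hkey]
    linarith

lemma trace_SCS_le {N d : ℕ} (hd : d ≤ N)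
    (C : Matrix (Fin N) (Fin N) ℝ)
    (lam : Fin N → ℝ) (hlam : Antitone lam)
    (V : Fin N → (Fin N → ℝ))
    (horth : ∀ i j, V i ⬝ᵥ V j = if i = j then (1:ℝ) else 0)
    (heig : ∀ i, C *ᵥ V i = lam i • V i)
    (S : Matrix (Fin d) (Fin N) ℝ) (hS : S * Sᵀ = 1) :
    (S * C * Sᵀ).trace ≤ ∑ i : Fin d, lam (Fin.castLE hd i) := by
  set W : Matrix (Fin N) (Fin N) ℝ := Matrix.of V with hW
  have hWWT : W * Wᵀ = 1 := by
    ext i j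
    simpa [hW, Matrix.mul_apply, dotProduct, Matrix.one_apply] using horth i j
  have hWTW : Wᵀ * W = 1 := mul_eq_one_comm.mp hWWT
  have hCW : C * Wᵀ = Wᵀ * Matrix.diagonal lam := by
    ext i j
    have h := congrFun (heig j) i
    simp only [Matrix.mulVec, dotProduct, Pi.smul_apply, smul_eq_mul] at h
    simp only [Matrix.mul_apply, Matrix.transpose_apply, Matrix.diagonal_apply, hW,
      Matrix.of_apply, mul_ite, mul_zero, Finset.sum_ite_eq, Finset.mem_univ, if_pos]
    rw [h, Finset.sum_ite_eq' Finset.univ j (fun x => V x i * lam x)]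
    simp [mul_comm]
  have hC : C = Wᵀ * Matrix.diagonal lam * W := by
    calc C = C * (Wᵀ * W) := by rw [hWTW, Matrix.mul_one]
    _ = (C * Wᵀ) * W := by rw [Matrix.mul_assoc]
    _ = Wᵀ * Matrix.diagonal lam * W := by rw [hCW]
  set Q : Matrix (Fin d) (Fin N) ℝ := S * Wᵀ with hQ
  have hQQT : Q * Qᵀ = 1 := by
    rw [hQ, transpose_mul, transpose_transpose, Matrix.mul_assoc,
      ← Matrix.mul_assoc Wᵀ W Sᵀ, hWTW, Matrix.one_mul, hS]
  set P : Matrix (Fin N) (Fin N) ℝ := Qᵀ * Q with hP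
  have hPsymm : Pᵀ = P := by rw [hP, transpose_mul, transpose_transpose]
  have hPP : P * P = P := by
    rw [hP, Matrix.mul_assoc, ← Matrix.mul_assoc Q Qᵀ Q, hQQT, Matrix.one_mul]
  set w : Fin N → ℝ := fun i => P i i with hw
  have h1 : (S * C * Sᵀ).trace = ∑ i, lam i * w i := by
    have : S * C * Sᵀ = Q * Matrix.diagonal lam * Qᵀ := by
      rw [hC, hQ, transpose_mul, transpose_transpose]
      simp only [Matrix.mul_assoc]
    rw [this, Matrix.trace_mul_cycle, ← hP]
    simp only [Matrix.trace, Matrix.diag, Matrix.mul_diagonal]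
    exact Finset.sum_congr rfl fun i _ => mul_comm _ _
  have hw0 : ∀ i, 0 ≤ w i := by
    intro i
    have : w i = ∑ k, (Q k i) ^ 2 := by
      simp [hw, hP, Matrix.mul_apply, sq]
    rw [this]
    exact Finset.sum_nonneg fun _ _ => sq_nonneg _
  have hsum : ∑ i, w i = d := by
    have : ∑ i, w i = P.trace := rfl
    rw [this, hP, Matrix.trace_mul_comm, hQQT, Matrix.trace_one]
    simp
  have hw1 : ∀ i, w i ≤ 1 := by
    intro i
    have hii : w i = ∑ k, (P i k) ^ 2 := by
      conv_lhs => rw [hw]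
      simp only
      conv_lhs => rw [← hPP]
      rw [Matrix.mul_apply]
      apply Finset.sum_congr rfl
      intro k _
      have : P k i = P i k := by
        conv_lhs => rw [← hPsymm, Matrix.transpose_apply]
      rw [this, sq]
    have hsq : (w i) ^ 2 ≤ w i := by
      conv_rhs => rw [hii]
      have h2 := Finset.single_le_sum (f := fun k => (P i k) ^ 2)
        (fun k _ => sq_nonneg _) (Finset.mem_univ i)
      exact h2
    nlinarith [hw0 i]
  rw [h1]
  exact kyfan hd lam w hlam hw0 hw1 hsum

lemma trace_S0 {N d : ℕ} (hd : d ≤ N)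
    (C : Matrix (Fin N) (Fin N) ℝ)
    (lam : Fin N → ℝ)
    (V : Fin N → (Fin N → ℝ))
    (horth : ∀ i j, V i ⬝ᵥ V j = if i = j then (1:ℝ) else 0)
    (heig : ∀ i, C *ᵥ V i = lam i • V i) :
    ((Matrix.of fun (i : Fin d) (j : Fin N) => V (Fin.castLE hd i) j) * C *
      (Matrix.of fun (i : Fin d) (j : Fin N) => V (Fin.castLE hd i) j)ᵀ).trace
      = ∑ i : Fin d, lam (Fin.castLE hd i) := by
  set S : Matrix (Fin d) (Fin N) ℝ := Matrix.of fun i j => V (Fin.castLE hd i) j with hSdef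
  apply Finset.sum_congr rfl
  intro i _
  set v := V (Fin.castLE hd i) with hv
  calc (S * C * Sᵀ) i i
      = ∑ j, (∑ k, v k * C k j) * v j := by
        simp [hSdef, Matrix.mul_apply, Matrix.transpose_apply, hv]
    _ = ∑ k, v k * (∑ j, C k j * v j) := by
        simp only [Finset.sum_mul, Finset.mul_sum]
        rw [Finset.sum_comm]
        apply Finset.sum_congr rfl; intro k _
        apply Finset.sum_congr rfl; intro j _
        ring
    _ = ∑ k, v k * ((C *ᵥ v) k) := rfl
    _ = ∑ k, v k * (lam (Fin.castLE hd i) * v k) := by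
        rw [hv, heig]
        simp [smul_eq_mul]
    _ = lam (Fin.castLE hd i) * (v ⬝ᵥ v) := by
        simp only [dotProduct, Finset.mul_sum]
        apply Finset.sum_congr rfl; intro k _
        ring
    _ = lam (Fin.castLE hd i) := by
        rw [hv, horth]
        simp

/-- The GMCCA optimum: the minimum of
`∑ₘ ‖Uₘᵀ Xₘ - S‖_F² + γ Tr(S L Sᵀ)` over all loading matrices `Uₘ` and all
`S ∈ ℝ^{d×N}` with `S Sᵀ = I_d` equals `M d - ∑_{i=1}^d λ_i`, where
`λ_1 ≥ … ≥ λ_N` are the eigenvalues of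
`C = ∑ₘ Xₘᵀ (Xₘ Xₘᵀ)⁻¹ Xₘ - γ L` (described by the antitone `lam` together
with an orthonormal family of eigenvectors `V`). -/
theorem gmcca_optimal_value {M N d : ℕ} (hd : d ≤ N) (Dm : Fin M → ℕ)
    (X : ∀ m, Matrix (Fin (Dm m)) (Fin N) ℝ)
    (hX : ∀ m, IsUnit (X m * (X m)ᵀ))
    (L : Matrix (Fin N) (Fin N) ℝ) (hL : L.IsSymm)
    (γ : ℝ) (hγ : 0 ≤ γ)
    (C : Matrix (Fin N) (Fin N) ℝ)
    (hCdef : C = (∑ m, (X m)ᵀ * (X m * (X m)ᵀ)⁻¹ * X m) - γ • L)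
    (lam : Fin N → ℝ) (hlam : Antitone lam)
    (V : Fin N → (Fin N → ℝ))
    (horth : ∀ i j, V i ⬝ᵥ V j = if i = j then (1 : ℝ) else 0)
    (heig : ∀ i, C *ᵥ V i = lam i • V i) :
    IsLeast
      {t : ℝ | ∃ (U : ∀ m, Matrix (Fin (Dm m)) (Fin d) ℝ)
          (S : Matrix (Fin d) (Fin N) ℝ), S * Sᵀ = 1 ∧
          t = (∑ m, frobSq ((U m)ᵀ * X m - S)) + γ * (S * L * Sᵀ).trace}
      ((M : ℝ) * (d : ℝ) - ∑ i : Fin d, lam (Fin.castLE hd i)) := by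
  -- a general rewriting of the objective
  have hobj : ∀ (U : ∀ m, Matrix (Fin (Dm m)) (Fin d) ℝ)
      (S : Matrix (Fin d) (Fin N) ℝ), S * Sᵀ = 1 →
      (∑ m, frobSq ((U m)ᵀ * X m - S)) + γ * (S * L * Sᵀ).trace
        = (∑ m, frobSq ((X m)ᵀ * (U m - (X m * (X m)ᵀ)⁻¹ * X m * Sᵀ)))
          + (M : ℝ) * (d : ℝ) - (S * C * Sᵀ).trace := by
    intro U S hS
    have hCsplit : (S * C * Sᵀ).trace
        = (∑ m, (S * ((X m)ᵀ * (X m * (X m)ᵀ)⁻¹ * X m) * Sᵀ).trace)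
          - γ * (S * L * Sᵀ).trace := by
      rw [hCdef, Matrix.mul_sub, Matrix.sub_mul, trace_sub]
      congr 1
      · rw [Matrix.mul_sum, Matrix.sum_mul, trace_sum]
      · rw [Matrix.mul_smul, Matrix.smul_mul, trace_smul, smul_eq_mul]
    have hterm : ∀ m, frobSq ((U m)ᵀ * X m - S)
        = frobSq ((X m)ᵀ * (U m - (X m * (X m)ᵀ)⁻¹ * X m * Sᵀ)) + d
          - (S * ((X m)ᵀ * (X m * (X m)ᵀ)⁻¹ * X m) * Sᵀ).trace :=
      fun m => view_identity (X m) (hX m) S hS (U m)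
    rw [Finset.sum_congr rfl fun m _ => hterm m]
    rw [hCsplit]
    rw [Finset.sum_sub_distrib, Finset.sum_add_distrib]
    simp only [Finset.sum_const, Finset.card_univ, Fintype.card_fin, nsmul_eq_mul]
    ring
  constructor
  · -- membership: the optimum is attained
    set S₀ : Matrix (Fin d) (Fin N) ℝ :=
      Matrix.of fun i j => V (Fin.castLE hd i) j with hS₀def
    have hS₀ : S₀ * S₀ᵀ = 1 := by
      ext i j
      have := horth (Fin.castLE hd i) (Fin.castLE hd j)
      simp only [dotProduct] at this
      simp only [hS₀def, Matrix.mul_apply, Matrix.transpose_apply, Matrix.of_apply,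
        Matrix.one_apply, this]
      congr 1
      simp [Fin.castLE, Fin.ext_iff]
    refine ⟨fun m => (X m * (X m)ᵀ)⁻¹ * X m * S₀ᵀ, S₀, hS₀, ?_⟩
    rw [hobj _ _ hS₀]
    have hzero : ∀ m : Fin M,
        frobSq ((X m)ᵀ * ((X m * (X m)ᵀ)⁻¹ * X m * S₀ᵀ
          - (X m * (X m)ᵀ)⁻¹ * X m * S₀ᵀ)) = 0 := by
      intro m
      rw [sub_self, Matrix.mul_zero, frobSq_zero]
    rw [Finset.sum_congr rfl fun m _ => hzero m]
    rw [trace_S0 hd C lam V horth heig]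
    simp
  · -- lower bound
    rintro t ⟨U, S, hS, rfl⟩
    rw [hobj U S hS]
    have h1 : 0 ≤ ∑ m, frobSq ((X m)ᵀ * (U m - (X m * (X m)ᵀ)⁻¹ * X m * Sᵀ)) :=
      Finset.sum_nonneg fun m _ => frobSq_nonneg _
    have h2 := trace_SCS_le hd C lam hlam V horth heig S hS
    linarith
end

section
/- Let X_1,…,X_M with X_m ∈ ℝ^{D_m×N} be matrices such that each X_mᵀ X_m ∈ ℝ^{N×N} is invertible, let L ∈ ℝ^{N×N} be a graph Laplacian with eigenvalues μ_1 ≤ μ_2 ≤ … ≤ μ_N, and let γ ≥ 0. Then the minimum of Σ_{m=1}^M ‖A_mᵀ X_mᵀ X_m − S‖_F² + γ Tr(S L Sᵀ) over all A_m ∈ ℝ^{N×d} and all S ∈ ℝ^{d×N} with S Sᵀ = I_d equals γ Σ_{i=1}^d μ_i; the minimum is attained when the rows of S are orthonormal eigenvectors of L associated with its d smallest eigenvalues (equivalently, the d principal eigenvectors of M·I − γL) and A_m = (X_mᵀ X_m)^{-1} Sᵀ for each m — so the optimal S does not depend on the data X_1,…,X_M. -/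
open Matrix BigOperators

/-- Sum against the indicator of the first `d` indices. -/
lemma sum_indicator_eq {N d : ℕ} (hd : d ≤ N) (f : Fin N → ℝ) :
    ∑ k : Fin N, f k * (if (k : ℕ) < d then (1:ℝ) else 0)
      = ∑ i : Fin d, f (Fin.castLE hd i) := by
  classical
  have h1 : ∑ k : Fin N, f k * (if (k : ℕ) < d then (1:ℝ) else 0)
      = ∑ k ∈ Finset.univ.filter (fun k : Fin N => (k : ℕ) < d), f k := by
    rw [Finset.sum_filter]
    exact Finset.sum_congr rfl fun k _ => by split <;> simp
  rw [h1]
  have himg : Finset.univ.filter (fun k : Fin N => (k : ℕ) < d)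
      = Finset.univ.image (Fin.castLE hd) := by
    ext k
    simp only [Finset.mem_filter, Finset.mem_univ, true_and, Finset.mem_image]
    constructor
    · intro h
      exact ⟨⟨(k : ℕ), h⟩, by ext; simp [Fin.castLE]⟩
    · rintro ⟨i, rfl⟩
      exact i.2
  rw [himg, Finset.sum_image (fun a _ b _ h => Fin.castLE_injective hd h)]

/-- Key scalar inequality: if `mu` is monotone nonnegative, `0 ≤ c k ≤ 1`, and
`∑ c = d`, then the sum of the `d` smallest values of `mu` bounds `∑ mu k * c k`. -/
lemma key_ineq {N d : ℕ} (hd : d ≤ N) (mu : Fin N → ℝ) (hmu : Monotone mu)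
    (hmu0 : ∀ k, 0 ≤ mu k)
    (c : Fin N → ℝ) (hc0 : ∀ k, 0 ≤ c k) (hc1 : ∀ k, c k ≤ 1)
    (hsum : ∑ k, c k = (d : ℝ)) :
    ∑ i : Fin d, mu (Fin.castLE hd i) ≤ ∑ k, mu k * c k := by
  classical
  rcases Nat.eq_zero_or_pos d with hd0 | hdpos
  · subst hd0
    simp only [Finset.univ_eq_empty, Finset.sum_empty]
    exact Finset.sum_nonneg fun k _ => mul_nonneg (hmu0 k) (hc0 k)
  · set ind : Fin N → ℝ := fun k => if (k : ℕ) < d then (1:ℝ) else 0 with hind_def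
    set τ : ℝ := mu ⟨d - 1, lt_of_lt_of_le (Nat.sub_lt hdpos one_pos) hd⟩ with hτ
    have hterm : ∀ k : Fin N, 0 ≤ (mu k - τ) * (c k - ind k) := by
      intro k
      by_cases hk : (k : ℕ) < d
      · have h1 : mu k ≤ τ := by
          apply hmu
          show (k : ℕ) ≤ d - 1
          omega
        have h2 : c k - ind k ≤ 0 := by simp [hind_def, hk]; linarith [hc1 k]
        nlinarith
      · have h1 : τ ≤ mu k := by
          apply hmu
          show (d : ℕ) - 1 ≤ (k : ℕ)
          omega
        have h2 : 0 ≤ c k - ind k := by simp [hind_def, hk]; linarith [hc0 k]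
        exact mul_nonneg (by linarith) h2
    have hsum0 : 0 ≤ ∑ k, (mu k - τ) * (c k - ind k) :=
      Finset.sum_nonneg fun k _ => hterm k
    have hind_sum : ∑ k, ind k = (d : ℝ) := by
      have := sum_indicator_eq hd (fun _ => (1:ℝ))
      simpa [hind_def] using this
    have hmuind : ∑ k, mu k * ind k = ∑ i : Fin d, mu (Fin.castLE hd i) :=
      sum_indicator_eq hd mu
    have hexp : ∑ k, (mu k - τ) * (c k - ind k)
        = (∑ k, mu k * c k) - (∑ k, mu k * ind k)
          - τ * ((∑ k, c k) - (∑ k, ind k)) := by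
      rw [mul_sub, Finset.mul_sum, Finset.mul_sum, ← Finset.sum_sub_distrib,
        ← Finset.sum_sub_distrib, ← Finset.sum_sub_distrib]
      exact Finset.sum_congr rfl fun k _ => by ring
    rw [hexp, hsum, hind_sum, hmuind, sub_self, mul_zero, sub_zero] at hsum0
    linarith

/-- Unregularized dual GMCCA: if each `Xₘᵀ Xₘ` is invertible and `L` is a graph
Laplacian with eigenvalues `μ₁ ≤ … ≤ μ_N` (given by a monotone `mu` together
with an orthonormal family of eigenvectors `V`), the minimum of
`∑ₘ ‖Aₘᵀ Xₘᵀ Xₘ - S‖_F² + γ Tr(S L Sᵀ)` over all duals `Aₘ ∈ ℝ^{N×d}` and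
`S ∈ ℝ^{d×N}` with `S Sᵀ = I_d` equals `γ ∑_{i=1}^d μᵢ`; it is attained when
the rows of `S` are the orthonormal eigenvectors of `L` associated with its
`d` smallest eigenvalues and `Aₘ = (Xₘᵀ Xₘ)⁻¹ Sᵀ` — so the optimal `S` does not
depend on the data. -/
theorem dual_gmcca_optimal_value {M N d : ℕ} (hd : d ≤ N) (Dm : Fin M → ℕ)
    (X : ∀ m, Matrix (Fin (Dm m)) (Fin N) ℝ)
    (hX : ∀ m, IsUnit ((X m)ᵀ * X m))
    (L : Matrix (Fin N) (Fin N) ℝ) (hL : L.PosSemidef)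
    (γ : ℝ) (hγ : 0 ≤ γ)
    (mu : Fin N → ℝ) (hmu : Monotone mu)
    (V : Fin N → (Fin N → ℝ))
    (horth : ∀ i j, V i ⬝ᵥ V j = if i = j then (1 : ℝ) else 0)
    (heig : ∀ i, L *ᵥ V i = mu i • V i) :
    IsLeast
      {t : ℝ | ∃ (A : ∀ m, Matrix (Fin N) (Fin d) ℝ)
          (S : Matrix (Fin d) (Fin N) ℝ), S * Sᵀ = 1 ∧
          t = (∑ m, frobSq ((A m)ᵀ * ((X m)ᵀ * X m) - S))
              + γ * (S * L * Sᵀ).trace}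
      (γ * ∑ i : Fin d, mu (Fin.castLE hd i)) ∧
    ∀ S : Matrix (Fin d) (Fin N) ℝ,
      S = Matrix.of (fun i : Fin d => V (Fin.castLE hd i)) →
      (∑ m, frobSq (((((X m)ᵀ * X m)⁻¹ * Sᵀ)ᵀ) * ((X m)ᵀ * X m) - S))
          + γ * (S * L * Sᵀ).trace
        = γ * ∑ i : Fin d, mu (Fin.castLE hd i) := by
  classical
  -- the optimal S
  set S₀ : Matrix (Fin d) (Fin N) ℝ := Matrix.of (fun i : Fin d => V (Fin.castLE hd i))
    with hS₀def
  have hS₀orth : S₀ * S₀ᵀ = 1 := by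
    ext i j
    simpa [S₀, Matrix.mul_apply, Matrix.one_apply, dotProduct,
      Fin.castLE_injective hd |>.eq_iff] using horth (Fin.castLE hd i) (Fin.castLE hd j)
  -- the frobenius terms vanish at the optimum
  have hAzero : ∀ m, ((((X m)ᵀ * X m)⁻¹ * S₀ᵀ)ᵀ) * ((X m)ᵀ * X m) - S₀ = 0 := by
    intro m
    have hdet : IsUnit ((X m)ᵀ * X m).det :=
      (Matrix.isUnit_iff_isUnit_det _).mp (hX m)
    have hsymm : ((X m)ᵀ * X m)ᵀ = (X m)ᵀ * X m := by
      rw [Matrix.transpose_mul, Matrix.transpose_transpose]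
    rw [Matrix.transpose_mul, Matrix.transpose_nonsing_inv, hsymm,
      Matrix.transpose_transpose, Matrix.mul_assoc,
      Matrix.nonsing_inv_mul _ hdet, Matrix.mul_one, sub_self]
  -- value of the trace at the optimum
  have htr0 : (S₀ * L * S₀ᵀ).trace = ∑ i : Fin d, mu (Fin.castLE hd i) := by
    have hLS : L * S₀ᵀ = S₀ᵀ * Matrix.diagonal (fun i : Fin d => mu (Fin.castLE hd i)) := by
      ext a i
      have h := congrFun (heig (Fin.castLE hd i)) a
      simp only [Matrix.mulVec, dotProduct, Pi.smul_apply, smul_eq_mul] at h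
      simp only [Matrix.mul_apply, Matrix.transpose_apply, Matrix.diagonal_apply,
        Matrix.of_apply, S₀, mul_ite, mul_zero, Finset.sum_ite_eq', Finset.mem_univ,
        if_true]
      rw [h]; ring
    rw [Matrix.mul_assoc, hLS, ← Matrix.mul_assoc, hS₀orth, Matrix.one_mul,
      Matrix.trace_diagonal]
  -- the common value computation
  have hval : (∑ m, frobSq (((((X m)ᵀ * X m)⁻¹ * S₀ᵀ)ᵀ) * ((X m)ᵀ * X m) - S₀))
      + γ * (S₀ * L * S₀ᵀ).trace = γ * ∑ i : Fin d, mu (Fin.castLE hd i) := by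
    rw [htr0]
    have : ∀ m, frobSq (((((X m)ᵀ * X m)⁻¹ * S₀ᵀ)ᵀ) * ((X m)ᵀ * X m) - S₀) = 0 := by
      intro m; rw [hAzero m, frobSq_zero]
    rw [Finset.sum_congr rfl fun m _ => this m]
    simp
  -- spectral decomposition setup
  set P : Matrix (Fin N) (Fin N) ℝ := Matrix.of V with hPdef
  have hPPt : P * Pᵀ = 1 := by
    ext i j
    simpa [P, Matrix.mul_apply, Matrix.one_apply, dotProduct] using horth i j
  have hPtP : Pᵀ * P = 1 := mul_eq_one_comm.mp hPPt
  have hLP : L * Pᵀ = Pᵀ * Matrix.diagonal mu := by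
    ext a k
    have h := congrFun (heig k) a
    simp only [Matrix.mulVec, dotProduct, Pi.smul_apply, smul_eq_mul] at h
    simp only [Matrix.mul_apply, Matrix.transpose_apply, Matrix.diagonal_apply,
      Matrix.of_apply, P, mul_ite, mul_zero, Finset.sum_ite_eq', Finset.mem_univ,
      if_true]
    rw [h]; ring
  have hLdecomp : L = Pᵀ * Matrix.diagonal mu * P := by
    calc L = L * (Pᵀ * P) := by rw [hPtP, Matrix.mul_one]
    _ = (L * Pᵀ) * P := by rw [Matrix.mul_assoc]
    _ = Pᵀ * Matrix.diagonal mu * P := by rw [hLP]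
  -- eigenvalues are nonnegative
  have hmu0 : ∀ k, 0 ≤ mu k := by
    intro k
    have h := hL.dotProduct_mulVec_nonneg (V k)
    rw [heig k] at h
    have horm : V k ⬝ᵥ V k = 1 := by simpa using horth k k
    have h2 : (V k) ⬝ᵥ (mu k • V k) = mu k := by
      rw [dotProduct_smul, smul_eq_mul, horm, mul_one]
    simpa [h2] using h
  -- lower bound for any feasible S
  have hlb : ∀ S : Matrix (Fin d) (Fin N) ℝ, S * Sᵀ = 1 →
      γ * ∑ i : Fin d, mu (Fin.castLE hd i) ≤ γ * (S * L * Sᵀ).trace := by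
    intro S hS
    apply mul_le_mul_of_nonneg_left _ hγ
    set Q : Matrix (Fin d) (Fin N) ℝ := S * Pᵀ with hQdef
    have hQQt : Q * Qᵀ = 1 := by
      have : Q * Qᵀ = S * (Pᵀ * P) * Sᵀ := by
        simp only [Q, Matrix.transpose_mul, Matrix.transpose_transpose, Matrix.mul_assoc]
      rw [this, hPtP, Matrix.mul_one, hS]
    set c : Fin N → ℝ := fun k => ∑ i, (Q i k) ^ 2 with hcdef
    have hSLS : S * L * Sᵀ = Q * Matrix.diagonal mu * Qᵀ := by
      rw [hLdecomp]
      simp only [Q, Matrix.transpose_mul, Matrix.transpose_transpose, Matrix.mul_assoc]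
    have htr : (S * L * Sᵀ).trace = ∑ k, mu k * c k := by
      rw [hSLS]
      have hdiag : ∀ i : Fin d, (Q * Matrix.diagonal mu * Qᵀ) i i
          = ∑ k, Q i k * mu k * Q i k := by
        intro i
        rw [Matrix.mul_apply]
        exact Finset.sum_congr rfl fun k _ => by
          rw [Matrix.mul_diagonal, Matrix.transpose_apply]
      rw [Matrix.trace]
      simp only [Matrix.diag]
      rw [Finset.sum_congr rfl fun i _ => hdiag i, Finset.sum_comm]
      refine Finset.sum_congr rfl fun k _ => ?_
      simp only [hcdef]
      rw [Finset.mul_sum]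
      exact Finset.sum_congr rfl fun i _ => by ring
    have hc0 : ∀ k, 0 ≤ c k := fun k => Finset.sum_nonneg fun i _ => sq_nonneg _
    have hcQtQ : ∀ k, (Qᵀ * Q) k k = c k := by
      intro k
      simp only [Matrix.mul_apply, Matrix.transpose_apply, c, sq]
    have hA2 : (Qᵀ * Q) * (Qᵀ * Q) = Qᵀ * Q := by
      calc (Qᵀ * Q) * (Qᵀ * Q) = Qᵀ * (Q * Qᵀ) * Q := by
            simp only [Matrix.mul_assoc]
      _ = Qᵀ * Q := by rw [hQQt, Matrix.mul_one]
    have hR : (1 - Qᵀ * Q)ᵀ * (1 - Qᵀ * Q) = 1 - Qᵀ * Q := by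
      have hsymm : (1 - Qᵀ * Q)ᵀ = 1 - Qᵀ * Q := by
        simp [Matrix.transpose_sub, Matrix.transpose_mul]
      rw [hsymm]
      simp only [Matrix.sub_mul, Matrix.mul_sub, Matrix.mul_one, Matrix.one_mul]
      rw [hA2]
      abel
    have hc1 : ∀ k, c k ≤ 1 := by
      intro k
      set R : Matrix (Fin N) (Fin N) ℝ := 1 - Qᵀ * Q with hRdef
      have h0 : 0 ≤ R k k := by
        have h0' : 0 ≤ (Rᵀ * R) k k := by
          rw [Matrix.mul_apply]
          apply Finset.sum_nonneg
          intro j _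
          simp only [Matrix.transpose_apply]
          exact mul_self_nonneg _
        rwa [hR] at h0'
      have h1 : R k k = 1 - c k := by
        rw [hRdef, Matrix.sub_apply, Matrix.one_apply_eq, hcQtQ k]
      rw [h1] at h0
      linarith
    have hcsum : ∑ k, c k = (d : ℝ) := by
      have h1 : ∑ k, c k = (Q * Qᵀ).trace := by
        simp only [Matrix.trace, Matrix.diag, Matrix.mul_apply, Matrix.transpose_apply, c, sq]
        rw [Finset.sum_comm]
      rw [h1, hQQt, Matrix.trace_one]
      simp
    rw [htr]
    exact key_ineq hd mu hmu hmu0 c hc0 hc1 hcsum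
  constructor
  · constructor
    · exact ⟨fun m => ((X m)ᵀ * X m)⁻¹ * S₀ᵀ, S₀, hS₀orth, hval.symm⟩
    · rintro t ⟨A, S, hS, rfl⟩
      have h1 : 0 ≤ ∑ m, frobSq ((A m)ᵀ * ((X m)ᵀ * X m) - S) :=
        Finset.sum_nonneg fun m _ => frobSq_nonneg _
      have h2 := hlb S hS
      linarith
  · intro S hSeq
    rw [hSeq]
    exact hval
end

section
/- Let K_1,…,K_M ∈ ℝ^{N×N} be symmetric positive semidefinite matrices, let L ∈ ℝ^{N×N} be symmetric, let γ ≥ 0 and ε > 0, and let S ∈ ℝ^{d×N} satisfy S Sᵀ = I_d. Then the minimum over A_1,…,A_M (with A_m ∈ ℝ^{N×d}) of Σ_{m=1}^M ‖A_mᵀ K_m − S‖_F² + γ Tr(S L Sᵀ) + ε Σ_{m=1}^M Tr(A_mᵀ K_m A_m) equals M·d − Tr(S C_g Sᵀ), where C_g = Σ_{m=1}^M K_m (K_m + εI)^{-1} − γ L, and the minimum is attained at A_m = (K_m + εI)^{-1} Sᵀ for each m. -/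
open Matrix BigOperators

lemma trace_nonneg_of_posSemidef {n : Type*} [Fintype n] [DecidableEq n] {P : Matrix n n ℝ}
    (hP : P.PosSemidef) : 0 ≤ P.trace := by
  rw [Matrix.trace]
  refine Finset.sum_nonneg fun i _ => ?_
  have := hP.dotProduct_mulVec_nonneg (Pi.single i 1)
  simpa [dotProduct, Matrix.mulVec, Pi.single_apply] using this

lemma posSemidef_smul_real {n : Type*} [Fintype n] {P : Matrix n n ℝ}
    (hP : P.PosSemidef) {c : ℝ} (hc : 0 ≤ c) : (c • P).PosSemidef := by
  refine Matrix.PosSemidef.of_dotProduct_mulVec_nonneg ?_ fun x => ?_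
  · have h := hP.isHermitian
    unfold Matrix.IsHermitian at *
    rw [conjTranspose_smul, h]
    simp
  · rw [smul_mulVec, dotProduct_smul, smul_eq_mul]
    exact mul_nonneg hc (hP.dotProduct_mulVec_nonneg x)

/-- The key per-view identity: completing the square in the dual variable. -/
lemma gkmcca_key {N d : ℕ} (K : Matrix (Fin N) (Fin N) ℝ) (hK : K.PosSemidef)
    (ε : ℝ) (hε : 0 < ε) (S : Matrix (Fin d) (Fin N) ℝ) (hS : S * Sᵀ = 1)
    (A : Matrix (Fin N) (Fin d) ℝ) :
    frobSq (Aᵀ * K - S) + ε * (Aᵀ * K * A).trace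
      = ((A - (K + ε • 1)⁻¹ * Sᵀ)ᵀ * (K * (K + ε • 1)) * (A - (K + ε • 1)⁻¹ * Sᵀ)).trace
        + (d : ℝ) - (S * (K * (K + ε • 1)⁻¹) * Sᵀ).trace := by
  set B : Matrix (Fin N) (Fin N) ℝ := K + ε • 1 with hB
  have hKs : Kᵀ = K := by
    rw [← Matrix.conjTranspose_eq_transpose_of_trivial]; exact hK.isHermitian
  have hεI : ((ε • 1 : Matrix (Fin N) (Fin N) ℝ)).PosDef := by
    rw [Matrix.smul_one_eq_diagonal]
    exact Matrix.posDef_diagonal_iff.mpr fun i => hε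
  have hBpd : B.PosDef := Matrix.PosDef.posSemidef_add hK hεI
  have hdet : IsUnit B.det := (Matrix.isUnit_iff_isUnit_det B).mp hBpd.isUnit
  have h1 : B * B⁻¹ = 1 := Matrix.mul_nonsing_inv B hdet
  have h2 : B⁻¹ * B = 1 := Matrix.nonsing_inv_mul B hdet
  have hBs : Bᵀ = B := by
    rw [hB, Matrix.transpose_add, hKs, Matrix.transpose_smul, Matrix.transpose_one]
  have hBinvS : (B⁻¹)ᵀ = B⁻¹ := by rw [Matrix.transpose_nonsing_inv, hBs]
  have hKB : K * B = B * K := by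
    rw [hB]; rw [Matrix.mul_add, Matrix.add_mul]
    congr 1
    rw [Matrix.mul_smul, Matrix.smul_mul, Matrix.mul_one, Matrix.one_mul]
  have hcomm : K * B⁻¹ = B⁻¹ * K := by
    calc K * B⁻¹ = 1 * (K * B⁻¹) := (one_mul _).symm
      _ = B⁻¹ * B * (K * B⁻¹) := by rw [h2]
      _ = B⁻¹ * (B * K) * B⁻¹ := by simp only [Matrix.mul_assoc]
      _ = B⁻¹ * (K * B) * B⁻¹ := by rw [hKB]
      _ = B⁻¹ * K * (B * B⁻¹) := by simp only [Matrix.mul_assoc]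
      _ = B⁻¹ * K := by rw [h1, mul_one]
  set A₀ : Matrix (Fin N) (Fin d) ℝ := B⁻¹ * Sᵀ with hA₀
  -- useful trace identities
  have htrS : (S * Sᵀ).trace = (d : ℝ) := by
    rw [hS, Matrix.trace_one]; simp
  have htr1 : (S * (Kᵀ * A)).trace = (Aᵀ * (K * Sᵀ)).trace := by
    rw [← Matrix.trace_transpose (S * (Kᵀ * A))]
    congr 1
    simp only [Matrix.transpose_mul, Matrix.transpose_transpose, Matrix.mul_assoc]
  -- expand frobSq
  have hfs : frobSq (Aᵀ * K - S)
      = (Aᵀ * (K * (Kᵀ * A))).trace - 2 * (Aᵀ * (K * Sᵀ)).trace + (d : ℝ) := by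
    rw [frobSq_eq_trace, Matrix.transpose_sub, Matrix.transpose_mul,
      Matrix.transpose_transpose, Matrix.sub_mul, Matrix.mul_sub, Matrix.mul_sub,
      Matrix.trace_sub, Matrix.trace_sub, Matrix.trace_sub, htrS, htr1]
    have e1 : Aᵀ * K * (Kᵀ * A) = Aᵀ * (K * (Kᵀ * A)) := by
      simp only [Matrix.mul_assoc]
    have e2 : Aᵀ * K * Sᵀ = Aᵀ * (K * Sᵀ) := by simp only [Matrix.mul_assoc]
    rw [e1, e2]; ring
  -- B * A₀ = Sᵀ
  have hBA₀ : B * A₀ = Sᵀ := by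
    rw [hA₀, ← Matrix.mul_assoc, h1, Matrix.one_mul]
  -- (K * B)ᵀ = K * B
  have hMs : (K * B)ᵀ = K * B := by
    rw [Matrix.transpose_mul, hKs, hBs, ← hKB]
  -- Tr(A₀ᵀ (KB) A) = Tr(Aᵀ K Sᵀ)
  have htr2 : (A₀ᵀ * (K * B) * A).trace = (Aᵀ * (K * Sᵀ)).trace := by
    rw [← Matrix.trace_transpose (A₀ᵀ * (K * B) * A)]
    congr 1
    simp only [Matrix.transpose_mul, Matrix.transpose_transpose, hMs]
    simp only [Matrix.mul_assoc, hBA₀]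
  -- Tr(Aᵀ (KB) A₀) = Tr(Aᵀ K Sᵀ)
  have htr3 : (Aᵀ * (K * B) * A₀).trace = (Aᵀ * (K * Sᵀ)).trace := by
    congr 1
    simp only [Matrix.mul_assoc, hBA₀]
  -- Tr(A₀ᵀ (KB) A₀) = Tr(S (K B⁻¹) Sᵀ)
  have htr4 : (A₀ᵀ * (K * B) * A₀).trace = (S * (K * B⁻¹) * Sᵀ).trace := by
    have hswap : B⁻¹ * (K * Sᵀ) = K * (B⁻¹ * Sᵀ) := by
      rw [← Matrix.mul_assoc, ← hcomm, Matrix.mul_assoc]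
    congr 1
    rw [hA₀, Matrix.transpose_mul, Matrix.transpose_transpose, hBinvS]
    have hBB : B * (B⁻¹ * Sᵀ) = Sᵀ := by rw [← Matrix.mul_assoc, h1, Matrix.one_mul]
    simp only [Matrix.mul_assoc, hBB]
    rw [hswap]
  -- expand the quadratic form
  have hquad : ((A - A₀)ᵀ * (K * B) * (A - A₀)).trace
      = (Aᵀ * (K * B) * A).trace - 2 * (Aᵀ * (K * Sᵀ)).trace
        + (S * (K * B⁻¹) * Sᵀ).trace := by
    simp only [Matrix.transpose_sub, Matrix.sub_mul, Matrix.mul_sub, Matrix.trace_sub]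
    rw [htr2, htr3, htr4]
    ring
  -- Tr(Aᵀ (KB) A) = Tr(Aᵀ K Kᵀ A) + ε Tr(Aᵀ K A)
  have hsplit : (Aᵀ * (K * B) * A).trace
      = (Aᵀ * (K * (Kᵀ * A))).trace + ε * (Aᵀ * K * A).trace := by
    have : K * B = K * Kᵀ + ε • K := by
      rw [hB, Matrix.mul_add, Matrix.mul_smul, Matrix.mul_one, hKs]
    rw [this]
    simp only [Matrix.mul_add, Matrix.add_mul, Matrix.trace_add, Matrix.mul_smul,
      Matrix.smul_mul, Matrix.trace_smul, smul_eq_mul, Matrix.mul_assoc]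
  rw [hfs, hquad, hsplit]
  ring

/-- For fixed `S` with `S Sᵀ = I`, the graph-regularized kernel MCCA objective
`∑ₘ ‖Aₘᵀ Kₘ - S‖_F² + γ Tr(S L Sᵀ) + ε ∑ₘ Tr(Aₘᵀ Kₘ Aₘ)` is minimized over the
dual matrices at `Aₘ = (Kₘ + εI)⁻¹ Sᵀ`, with minimum value
`M d - Tr(S C_g Sᵀ)`, where `C_g = ∑ₘ Kₘ (Kₘ + εI)⁻¹ - γ L`. -/
theorem gkmcca_inner_minimization {M N d : ℕ}
    (K : Fin M → Matrix (Fin N) (Fin N) ℝ) (hK : ∀ m, (K m).PosSemidef)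
    (L : Matrix (Fin N) (Fin N) ℝ) (hL : L.IsSymm)
    (γ ε : ℝ) (hγ : 0 ≤ γ) (hε : 0 < ε)
    (S : Matrix (Fin d) (Fin N) ℝ) (hS : S * Sᵀ = 1) :
    (∀ A : Fin M → Matrix (Fin N) (Fin d) ℝ,
        (∑ m, frobSq ((((K m + ε • 1)⁻¹ * Sᵀ)ᵀ) * K m - S))
            + γ * (S * L * Sᵀ).trace
            + ε * ∑ m, ((((K m + ε • 1)⁻¹ * Sᵀ)ᵀ) * K m
                * ((K m + ε • 1)⁻¹ * Sᵀ)).trace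
          ≤ (∑ m, frobSq ((A m)ᵀ * K m - S)) + γ * (S * L * Sᵀ).trace
            + ε * ∑ m, ((A m)ᵀ * K m * A m).trace) ∧
    (∑ m, frobSq ((((K m + ε • 1)⁻¹ * Sᵀ)ᵀ) * K m - S))
        + γ * (S * L * Sᵀ).trace
        + ε * ∑ m, ((((K m + ε • 1)⁻¹ * Sᵀ)ᵀ) * K m
            * ((K m + ε • 1)⁻¹ * Sᵀ)).trace
      = (M : ℝ) * (d : ℝ)
        - (S * ((∑ m, K m * (K m + ε • 1)⁻¹) - γ • L) * Sᵀ).trace := by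
  have hKs : ∀ m, (K m)ᵀ = K m := fun m => by
    rw [← Matrix.conjTranspose_eq_transpose_of_trivial]; exact (hK m).isHermitian
  -- per-view objective at the minimizer
  have hval : ∀ m, frobSq ((((K m + ε • 1)⁻¹ * Sᵀ)ᵀ) * K m - S)
      + ε * ((((K m + ε • 1)⁻¹ * Sᵀ)ᵀ) * K m * ((K m + ε • 1)⁻¹ * Sᵀ)).trace
      = (d : ℝ) - (S * (K m * (K m + ε • 1)⁻¹) * Sᵀ).trace := by
    intro m
    have h := gkmcca_key (K m) (hK m) ε hε S hS ((K m + ε • 1)⁻¹ * Sᵀ)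
    rw [h, sub_self]
    simp
  -- PSD of K * (K + ε•1)
  have hpsd : ∀ m, (K m * (K m + ε • 1)).PosSemidef := by
    intro m
    have hrw : K m * (K m + ε • 1) = K m * (K m)ᵀ + ε • K m := by
      rw [Matrix.mul_add, Matrix.mul_smul, Matrix.mul_one, hKs m]
    rw [hrw]
    refine Matrix.PosSemidef.add ?_ (posSemidef_smul_real (hK m) (le_of_lt hε))
    have := Matrix.posSemidef_self_mul_conjTranspose (K m)
    rwa [Matrix.conjTranspose_eq_transpose_of_trivial] at this
  constructor
  · intro A
    have hper : ∀ m, frobSq ((((K m + ε • 1)⁻¹ * Sᵀ)ᵀ) * K m - S)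
        + ε * ((((K m + ε • 1)⁻¹ * Sᵀ)ᵀ) * K m * ((K m + ε • 1)⁻¹ * Sᵀ)).trace
        ≤ frobSq ((A m)ᵀ * K m - S) + ε * ((A m)ᵀ * K m * (A m)).trace := by
      intro m
      rw [hval m, gkmcca_key (K m) (hK m) ε hε S hS (A m)]
      have hnn : 0 ≤ ((A m - (K m + ε • 1)⁻¹ * Sᵀ)ᵀ * (K m * (K m + ε • 1))
          * (A m - (K m + ε • 1)⁻¹ * Sᵀ)).trace := by
        refine trace_nonneg_of_posSemidef ?_
        have := (hpsd m).conjTranspose_mul_mul_same (A m - (K m + ε • 1)⁻¹ * Sᵀ)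
        rwa [Matrix.conjTranspose_eq_transpose_of_trivial] at this
      linarith
    have hsum : ∑ m, (frobSq ((((K m + ε • 1)⁻¹ * Sᵀ)ᵀ) * K m - S)
        + ε * ((((K m + ε • 1)⁻¹ * Sᵀ)ᵀ) * K m * ((K m + ε • 1)⁻¹ * Sᵀ)).trace)
        ≤ ∑ m, (frobSq ((A m)ᵀ * K m - S) + ε * ((A m)ᵀ * K m * (A m)).trace) :=
      Finset.sum_le_sum fun m _ => hper m
    rw [Finset.sum_add_distrib, Finset.sum_add_distrib, ← Finset.mul_sum,
      ← Finset.mul_sum] at hsum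
    linarith
  · have hsum : ∑ m, (frobSq ((((K m + ε • 1)⁻¹ * Sᵀ)ᵀ) * K m - S)
        + ε * ((((K m + ε • 1)⁻¹ * Sᵀ)ᵀ) * K m * ((K m + ε • 1)⁻¹ * Sᵀ)).trace)
        = ∑ m : Fin M, ((d : ℝ) - (S * (K m * (K m + ε • 1)⁻¹) * Sᵀ).trace) :=
      Finset.sum_congr rfl fun m _ => hval m
    rw [Finset.sum_add_distrib, ← Finset.mul_sum] at hsum
    rw [add_right_comm]
    rw [hsum]
    -- RHS trace linearity
    have hR : (S * ((∑ m, K m * (K m + ε • 1)⁻¹) - γ • L) * Sᵀ).trace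
        = (∑ m, (S * (K m * (K m + ε • 1)⁻¹) * Sᵀ).trace) - γ * (S * L * Sᵀ).trace := by
      rw [Matrix.mul_sub, Matrix.sub_mul, Matrix.trace_sub]
      congr 1
      · rw [Matrix.mul_sum, Matrix.sum_mul, Matrix.trace_sum]
      · rw [Matrix.mul_smul, Matrix.smul_mul, Matrix.trace_smul, smul_eq_mul]
    rw [hR, Finset.sum_sub_distrib]
    simp [Finset.sum_const, Finset.card_univ]
    ring
end
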